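/- Let G be a locally compact, second countable, Hausdorff topological group and let L₀ ∈ 𝒞(G) be uniformly separated. Let Ω×_{L₀} := Ω_{L₀} \ {∅} and let H := {(g, L) ∈ G × Ω×_{L₀} : g·L ∈ Ξ_{L₀}}, equipped with the subspace topology from G × 𝒞(G) (Fell topology on the second factor). Then: (i) for every L ∈ Ω×_{L₀} there exists g ∈ G with g·L ∈ Ξ_{L₀}; (ii) the map H → Ω×_{L₀}, (g, L) ↦ L, is an open map; (iii) the map H → Ξ_{L₀}, (g, L) ↦ g·L, is an open map. That is, Ξ_{L₀} is an abstract transversal for the transformation groupoid of the dynamical system (G, Ω×_{L₀}). -/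

import Mathlib

open Set Topology Filter

/-- The space of closed subsets of a topological space `X`. -/
structure ClosedSubsets (X : Type*) [TopologicalSpace X] where
  carrier : Set X
  isClosed' : IsClosed carrier

namespace ClosedSubsets

variable {X : Type*} [TopologicalSpace X]

/-- The Fell topology on the space of closed subsets. -/
instance : TopologicalSpace (ClosedSubsets X) :=
  TopologicalSpace.generateFrom
    {U | ∃ (K : Set X) (𝓕 : Set (Set X)), IsCompact K ∧ 𝓕.Finite ∧
      (∀ F ∈ 𝓕, IsOpen F ∧ F.Nonempty) ∧
      U = {Y : ClosedSubsets X | Y.carrier ∩ K = ∅ ∧ ∀ F ∈ 𝓕, (Y.carrier ∩ F).Nonempty}}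

end ClosedSubsets

variable {G : Type*} [Group G] [TopologicalSpace G] [IsTopologicalGroup G]

/-- The right action `g • C = C g⁻¹` of a topological group on its closed subsets. -/
def ClosedSubsets.smul (g : G) (C : ClosedSubsets G) : ClosedSubsets G :=
  ⟨(fun x => x * g⁻¹) '' C.carrier, by
    simpa using (Homeomorph.mulRight g⁻¹).isClosedMap _ C.isClosed'⟩

/-- A closed set `L` is `S`-separated if `|L ∩ g·S| ≤ 1` for all `g`. -/
def SSeparated (S L : Set G) : Prop :=
  ∀ g : G, (L ∩ (fun x => x * g⁻¹) '' S).Subsingleton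

/-- A closed set is uniformly separated if it is `U`-separated for some nonempty open `U`. -/
def UniformlySeparated (L : Set G) : Prop :=
  ∃ U : Set G, IsOpen U ∧ U.Nonempty ∧ SSeparated U L

/-- The hull of `L`: the closure of its orbit in the Fell topology. -/
def hull (L : ClosedSubsets G) : Set (ClosedSubsets G) :=
  closure {C | ∃ g : G, C = ClosedSubsets.smul g L}

/-- The standard transversal of `L`. -/
def transversal (L : ClosedSubsets G) : Set (ClosedSubsets G) :=
  {L' | L' ∈ hull L ∧ (1 : G) ∈ L'.carrier}

/-- The punctured hull `Ω×_L := Ω_L \ {∅}`. -/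
def puncturedHull (L : ClosedSubsets G) : Set (ClosedSubsets G) :=
  hull L \ {⟨∅, isClosed_empty⟩}

-- AUX START
namespace ClosedSubsets

@[ext] lemma ext' {A B : ClosedSubsets G} (h : A.carrier = B.carrier) : A = B := by
  cases A; cases B; simpa using h

lemma mem_smul {g : G} {C : ClosedSubsets G} {x : G} :
    x ∈ (ClosedSubsets.smul g C).carrier ↔ x * g ∈ C.carrier := by
  constructor
  · rintro ⟨c, hc, rfl⟩; simpa
  · intro h; exact ⟨x * g, h, by simp⟩

lemma smul_smul' (g h : G) (C : ClosedSubsets G) :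
    ClosedSubsets.smul g (ClosedSubsets.smul h C) = ClosedSubsets.smul (g * h) C := by
  apply ext'
  show (fun x => x * g⁻¹) '' ((fun x => x * h⁻¹) '' C.carrier) = _
  rw [Set.image_image]
  exact Set.image_congr fun x _ => by rw [mul_inv_rev, mul_assoc]

lemma smul_one' (C : ClosedSubsets G) : ClosedSubsets.smul (1 : G) C = C := by
  apply ext'
  simp [ClosedSubsets.smul]

lemma inter_image_empty {g : G} {A S : Set G} :
    ((fun x => x * g⁻¹) '' A) ∩ S = (fun x => x * g⁻¹) '' (A ∩ (fun x => x * g) '' S) := by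
  ext x
  constructor
  · rintro ⟨⟨a, ha, rfl⟩, hx⟩
    exact ⟨a, ⟨ha, ⟨a * g⁻¹, hx, by simp⟩⟩, rfl⟩
  · rintro ⟨a, ⟨ha, s, hs, hsa⟩, rfl⟩
    refine ⟨⟨a, ha, rfl⟩, ?_⟩
    show a * g⁻¹ ∈ S
    have : a * g⁻¹ = s := by rw [← hsa]; simp
    rwa [this]

lemma smul_inter_empty_iff {g : G} {Y : ClosedSubsets G} {S : Set G} :
    (ClosedSubsets.smul g Y).carrier ∩ S = ∅ ↔
      Y.carrier ∩ ((fun x => x * g) '' S) = ∅ := by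
  rw [show (ClosedSubsets.smul g Y).carrier = (fun x => x * g⁻¹) '' Y.carrier from rfl,
    inter_image_empty, Set.image_eq_empty]

lemma smul_inter_nonempty_iff {g : G} {Y : ClosedSubsets G} {S : Set G} :
    ((ClosedSubsets.smul g Y).carrier ∩ S).Nonempty ↔
      (Y.carrier ∩ ((fun x => x * g) '' S)).Nonempty := by
  rw [show (ClosedSubsets.smul g Y).carrier = (fun x => x * g⁻¹) '' Y.carrier from rfl,
    inter_image_empty, Set.image_nonempty]

lemma continuous_smul' (g : G) :
    Continuous (ClosedSubsets.smul g : ClosedSubsets G → ClosedSubsets G) := by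
  apply continuous_generateFrom_iff.mpr
  rintro U ⟨K, 𝓕, hK, h𝓕fin, h𝓕, rfl⟩
  have heq : (ClosedSubsets.smul g : ClosedSubsets G → ClosedSubsets G) ⁻¹'
      {Y : ClosedSubsets G | Y.carrier ∩ K = ∅ ∧ ∀ F ∈ 𝓕, (Y.carrier ∩ F).Nonempty} =
      {Y : ClosedSubsets G | Y.carrier ∩ ((fun x => x * g) '' K) = ∅ ∧
        ∀ F ∈ (Set.image (fun x => x * g)) '' 𝓕, (Y.carrier ∩ F).Nonempty} := by
    ext Y
    simp only [Set.mem_preimage, Set.mem_setOf_eq, smul_inter_empty_iff,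
      smul_inter_nonempty_iff, Set.forall_mem_image]
  rw [heq]
  apply TopologicalSpace.isOpen_generateFrom_of_mem
  refine ⟨(fun x => x * g) '' K, (Set.image (fun x => x * g)) '' 𝓕,
    hK.image (continuous_mul_right g), h𝓕fin.image _, ?_, rfl⟩
  rintro F' ⟨F, hF, rfl⟩
  exact ⟨(Homeomorph.mulRight g).isOpenMap F (h𝓕 F hF).1,
    Set.Nonempty.image _ (h𝓕 F hF).2⟩

lemma isOpen_hitting {V : Set G} (hV : IsOpen V) :
    IsOpen {Y : ClosedSubsets G | (Y.carrier ∩ V).Nonempty} := by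
  rcases V.eq_empty_or_nonempty with rfl | hne
  · convert isOpen_empty
    ext Y; simp
  · have heq : {Y : ClosedSubsets G | (Y.carrier ∩ V).Nonempty} =
        {Y : ClosedSubsets G | Y.carrier ∩ (∅ : Set G) = ∅ ∧
          ∀ F ∈ ({V} : Set (Set G)), (Y.carrier ∩ F).Nonempty} := by
      ext Y; simp
    rw [heq]
    exact TopologicalSpace.isOpen_generateFrom_of_mem
      ⟨∅, {V}, isCompact_empty, Set.finite_singleton V, by simpa using ⟨hV, hne⟩, rfl⟩

end ClosedSubsets

lemma smul_mem_hull {L₀ L : ClosedSubsets G} (h : L ∈ hull L₀) (g : G) :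
    ClosedSubsets.smul g L ∈ hull L₀ := by
  refine map_mem_closure (ClosedSubsets.continuous_smul' g) h ?_
  rintro C ⟨h', rfl⟩
  exact ⟨g * h', ClosedSubsets.smul_smul' g h' L₀⟩

lemma mem_puncturedHull_iff {L₀ L : ClosedSubsets G} :
    L ∈ puncturedHull L₀ ↔ L ∈ hull L₀ ∧ L.carrier.Nonempty := by
  unfold puncturedHull
  rw [Set.mem_diff, Set.mem_singleton_iff]
  refine and_congr_right fun _ => ?_
  rw [Set.nonempty_iff_ne_empty]
  constructor
  · intro h h'; exact h (ClosedSubsets.ext' h')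
  · intro h h'; exact h (congrArg ClosedSubsets.carrier h')

/-- For a lcsc Hausdorff topological group `G` and a uniformly separated
`L₀ ∈ 𝒞(G)`, the standard transversal `Ξ_{L₀}` is an abstract transversal for the transformation
groupoid of `(G, Ω×_{L₀})`: every `G`-orbit in the punctured hull meets `Ξ_{L₀}`, and the source
and range maps restricted to `H = {(g, L) : L ∈ Ω×_{L₀}, g·L ∈ Ξ_{L₀}}` are open. -/
theorem transversal_is_abstract_transversal (G : Type*) [Group G] [TopologicalSpace G]
    [IsTopologicalGroup G] [LocallyCompactSpace G] [SecondCountableTopology G] [T2Space G]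
    (L₀ : ClosedSubsets G) (hsep : UniformlySeparated L₀.carrier) :
    (∀ L ∈ puncturedHull L₀, ∃ g : G, ClosedSubsets.smul g L ∈ transversal L₀) ∧
    IsOpenMap
      (fun p : {p : G × ClosedSubsets G //
          p.2 ∈ puncturedHull L₀ ∧ ClosedSubsets.smul p.1 p.2 ∈ transversal L₀} =>
        (⟨p.1.2, p.2.1⟩ : puncturedHull L₀)) ∧
    IsOpenMap
      (fun p : {p : G × ClosedSubsets G //
          p.2 ∈ puncturedHull L₀ ∧ ClosedSubsets.smul p.1 p.2 ∈ transversal L₀} =>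
        (⟨ClosedSubsets.smul p.1.1 p.1.2, p.2.2⟩ : transversal L₀)) := by
  refine ⟨?_, ?_, ?_⟩
  · -- (i)
    intro L hL
    obtain ⟨hhull, hne⟩ := mem_puncturedHull_iff.mp hL
    obtain ⟨x, hx⟩ := hne
    exact ⟨x, smul_mem_hull hhull x, ClosedSubsets.mem_smul.mpr (by simpa using hx)⟩
  · -- (ii) source map open
    intro U hU
    rw [isOpen_induced_iff] at hU
    obtain ⟨W, hW, rfl⟩ := hU
    rw [isOpen_iff_forall_mem_open]
    rintro x ⟨⟨⟨g, L⟩, hp1, hp2⟩, hpW, rfl⟩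
    have hpW' : (g, L) ∈ W := hpW
    obtain ⟨V, O, hVopen, hOopen, hgV, hLO, hVO⟩ := (isOpen_prod_iff.mp hW) g L hpW'
    refine ⟨Subtype.val ⁻¹' (O ∩ {Y | (Y.carrier ∩ V).Nonempty}), ?_, ?_, ?_⟩
    · rintro ⟨L', hL'⟩ ⟨hL'O, v, hvL', hvV⟩
      have hvL'' : v ∈ L'.carrier := hvL'
      refine ⟨⟨(v, L'), hL', smul_mem_hull hL'.1 v,
        ClosedSubsets.mem_smul.mpr (by simpa using hvL'')⟩, hVO ⟨hvV, hL'O⟩, rfl⟩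
    · exact (hOopen.inter (ClosedSubsets.isOpen_hitting hVopen)).preimage continuous_subtype_val
    · have hgL : g ∈ L.carrier := by simpa using ClosedSubsets.mem_smul.mp hp2.2
      exact ⟨hLO, g, hgL, hgV⟩
  · -- (iii) range map open
    intro U hU
    rw [isOpen_induced_iff] at hU
    obtain ⟨W, hW, rfl⟩ := hU
    rw [isOpen_iff_forall_mem_open]
    rintro x ⟨⟨⟨g, L⟩, hp1, hp2⟩, hpW, rfl⟩
    have hpW' : (g, L) ∈ W := hpW
    obtain ⟨V, O, hVopen, hOopen, hgV, hLO, hVO⟩ := (isOpen_prod_iff.mp hW) g L hpW'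
    refine ⟨Subtype.val ⁻¹' (⋃ v ∈ V, (ClosedSubsets.smul v⁻¹) ⁻¹' O), ?_, ?_, ?_⟩
    · rintro ⟨L', hL'⟩ hmem
      simp only [Set.mem_preimage, Set.mem_iUnion] at hmem
      obtain ⟨v, hvV, hvO⟩ := hmem
      have h1L' : (1 : G) ∈ L'.carrier := hL'.2
      have hback : ClosedSubsets.smul v (ClosedSubsets.smul v⁻¹ L') = L' := by
        rw [ClosedSubsets.smul_smul', mul_inv_cancel, ClosedSubsets.smul_one']
      have hPH : ClosedSubsets.smul v⁻¹ L' ∈ puncturedHull L₀ :=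
        mem_puncturedHull_iff.mpr ⟨smul_mem_hull hL'.1 v⁻¹,
          ⟨v, ClosedSubsets.mem_smul.mpr (by simpa using h1L')⟩⟩
      have hTR : ClosedSubsets.smul v (ClosedSubsets.smul v⁻¹ L') ∈ transversal L₀ := by
        rw [hback]; exact hL'
      exact ⟨⟨(v, ClosedSubsets.smul v⁻¹ L'), hPH, hTR⟩, hVO ⟨hvV, hvO⟩, Subtype.ext hback⟩
    · refine (isOpen_biUnion fun v _ => ?_).preimage continuous_subtype_val
      exact (ClosedSubsets.continuous_smul' v⁻¹).isOpen_preimage O hOopen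
    · simp only [Set.mem_preimage, Set.mem_iUnion]
      refine ⟨g, hgV, ?_⟩
      show ClosedSubsets.smul g⁻¹ (ClosedSubsets.smul g L) ∈ O
      rwa [ClosedSubsets.smul_smul', inv_mul_cancel, ClosedSubsets.smul_one']
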